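/- arXiv:1409.2830 — 3 statements merged into one kernel-verified Lean document; each statement's English description precedes it below -/
import Mathlib

section
/- Let 0 < H1 ≤ H2, H1·H2 < H1 + H2, c > 0, and h(u,v) = (u^2 + c·|v|^(2H2/H1))^(-H1/2). Then the integral ∫∫_{ℝ²} |1 - e^{iu}|² |1 - e^{iv}|² · h(u,v) / (u² v²) du dv is finite. -/
open Real MeasureTheory Set

lemma aux_int1 {r : ℝ} (hr0 : 0 ≤ r) (hr1 : r < 1) :
    Integrable (fun u : ℝ => 2 * (1 - Real.cos u) * |u| ^ (-(2 + r))) := by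
  have hmeas : Measurable (fun u : ℝ => 2 * (1 - Real.cos u) * |u| ^ (-(2 + r))) := by
    fun_prop
  have hIoi : IntegrableOn (fun u : ℝ => 2 * (1 - Real.cos u) * |u| ^ (-(2 + r))) (Ioi 0) := by
    have hsplit : Ioi (0:ℝ) = Ioc 0 1 ∪ Ioi 1 := (Ioc_union_Ioi_eq_Ioi zero_le_one).symm
    rw [hsplit, integrableOn_union]
    constructor
    · -- on (0,1]: bound by u ^ (-r)
      have hint : IntegrableOn (fun u : ℝ => u ^ (-r)) (Ioc (0:ℝ) 1) := by
        rw [← intervalIntegrable_iff_integrableOn_Ioc_of_le zero_le_one]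
        exact intervalIntegral.intervalIntegrable_rpow' (by linarith)
      refine Integrable.mono' hint (hmeas.aestronglyMeasurable.restrict) ?_
      filter_upwards [ae_restrict_mem measurableSet_Ioc] with x hx
      have hx0 : 0 < x := hx.1
      have hcos : 0 ≤ 1 - Real.cos x := by nlinarith [Real.cos_le_one x]
      rw [Real.norm_eq_abs, abs_of_nonneg (by positivity)]
      have h2 : 2 * (1 - Real.cos x) ≤ x ^ 2 := by
        nlinarith [Real.one_sub_sq_div_two_le_cos (x := x)]
      calc 2 * (1 - Real.cos x) * |x| ^ (-(2 + r)) ≤ x ^ 2 * |x| ^ (-(2 + r)) := by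
            apply mul_le_mul_of_nonneg_right h2 (by positivity)
        _ = x ^ (-r) := by
            rw [abs_of_pos hx0, ← Real.rpow_natCast x 2, ← Real.rpow_add hx0]
            norm_num
    · -- on (1,∞): bound by 4 * u ^ (-(2+r))
      have hint : IntegrableOn (fun u : ℝ => 4 * u ^ (-(2 + r))) (Ioi (1:ℝ)) := by
        exact ((integrableOn_Ioi_rpow_iff one_pos).mpr (by linarith)).const_mul 4
      refine Integrable.mono' hint (hmeas.aestronglyMeasurable.restrict) ?_
      filter_upwards [ae_restrict_mem measurableSet_Ioi] with x hx
      have hx0 : (0:ℝ) < x := lt_trans one_pos hx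
      have hcos : 0 ≤ 1 - Real.cos x := by nlinarith [Real.cos_le_one x]
      rw [Real.norm_eq_abs, abs_of_nonneg (by positivity), abs_of_pos hx0]
      have h2 : 2 * (1 - Real.cos x) ≤ 4 := by nlinarith [Real.neg_one_le_cos x]
      exact mul_le_mul_of_nonneg_right h2 (by positivity)
  have hIio : IntegrableOn (fun u : ℝ => 2 * (1 - Real.cos u) * |u| ^ (-(2 + r))) (Iio 0) := by
    rw [← (Measure.measurePreserving_neg (volume : Measure ℝ)).integrableOn_comp_preimage
        (Homeomorph.neg ℝ).measurableEmbedding]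
    simp only [Function.comp_def, Real.cos_neg, abs_neg, neg_preimage, neg_Iio, neg_zero]
    exact hIoi
  rw [← integrableOn_univ, ← Iio_union_Ici (a := (0:ℝ)), integrableOn_union,
    integrableOn_Ici_iff_integrableOn_Ioi]
  exact ⟨hIio, hIoi⟩

theorem stmt1 (H1 H2 c : ℝ) (h1 : 0 < H1) (h12 : H1 ≤ H2)
    (hprod : H1 * H2 < H1 + H2) (hc : 0 < c) :
    Integrable (fun p : ℝ × ℝ =>
      (2 * (1 - Real.cos p.1)) * (2 * (1 - Real.cos p.2)) *
        ((p.1 ^ (2 : ℕ) + c * |p.2| ^ (2 * H2 / H1)) ^ (-(H1 / 2))) /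
        (p.1 ^ (2 : ℕ) * p.2 ^ (2 : ℕ))) := by
  have hH2 : 0 < H2 := h1.trans_le h12
  set L : ℝ := max (1 - 1 / H2) 0 with hL
  set U : ℝ := min (1 / H1) 1 with hU
  have hkey : 1 - 1 / H2 < 1 / H1 := by
    have : 1 < 1 / H1 + 1 / H2 := by
      rw [div_add_div _ _ h1.ne' hH2.ne', lt_div_iff₀ (by positivity)]
      nlinarith
    linarith
  have hLU : L < U := by
    rw [hL, hU]
    apply max_lt <;> apply lt_min
    · exact hkey
    · have : 0 < 1 / H2 := by positivity
      linarith
    · positivity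
    · norm_num
  set θ : ℝ := (L + U) / 2 with hθ
  have hθL : L < θ := by rw [hθ]; linarith
  have hθU : θ < U := by rw [hθ]; linarith
  have hθ0 : 0 < θ := lt_of_le_of_lt (le_max_right _ _) hθL
  have hθ1 : θ < 1 := lt_of_lt_of_le hθU (min_le_right _ _)
  set P : ℝ := θ * H1 with hP
  set Q : ℝ := (1 - θ) * H2 with hQ
  have hP0 : 0 < P := by positivity
  have hP1 : P < 1 := by
    have h' : θ < 1 / H1 := lt_of_lt_of_le hθU (min_le_left _ _)
    rw [hP]
    calc θ * H1 < (1 / H1) * H1 := mul_lt_mul_of_pos_right h' h1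
      _ = 1 := by field_simp
  have hQ0 : 0 < Q := mul_pos (by linarith) hH2
  have hQ1 : Q < 1 := by
    have h' : 1 - 1 / H2 < θ := lt_of_le_of_lt (le_max_left _ _) hθL
    have h'' : 1 - θ < 1 / H2 := by linarith
    rw [hQ]
    calc (1 - θ) * H2 < (1 / H2) * H2 := mul_lt_mul_of_pos_right h'' hH2
      _ = 1 := by field_simp
  set C : ℝ := c ^ (-((1 - θ) * (H1 / 2))) with hC
  have hCpos : 0 < C := Real.rpow_pos_of_pos hc _
  have hbound : Integrable (fun z : ℝ × ℝ =>
      (2 * (1 - Real.cos z.1) * |z.1| ^ (-(2 + P))) *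
        (C * (2 * (1 - Real.cos z.2) * |z.2| ^ (-(2 + Q))))) := by
    rw [Measure.volume_eq_prod]
    exact (aux_int1 hP0.le hP1).mul_prod ((aux_int1 hQ0.le hQ1).const_mul C)
  refine hbound.mono' ?_ ?_
  · apply Measurable.aestronglyMeasurable
    fun_prop
  · have h1ae : ∀ᵐ z : ℝ × ℝ, z.1 ≠ 0 := by
      rw [ae_iff]
      have hset : {z : ℝ × ℝ | ¬ z.1 ≠ 0} = ({(0:ℝ)} : Set ℝ) ×ˢ (univ : Set ℝ) := by
        ext ⟨a, b⟩; simp [eq_comm]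
      rw [hset, Measure.volume_eq_prod, Measure.prod_prod]
      simp
    have h2ae : ∀ᵐ z : ℝ × ℝ, z.2 ≠ 0 := by
      rw [ae_iff]
      have hset : {z : ℝ × ℝ | ¬ z.2 ≠ 0} = (univ : Set ℝ) ×ˢ ({(0:ℝ)} : Set ℝ) := by
        ext ⟨a, b⟩; simp [eq_comm]
      rw [hset, Measure.volume_eq_prod, Measure.prod_prod]
      simp
    filter_upwards [h1ae, h2ae] with z hu hv
    obtain ⟨u, v⟩ := z
    simp only at hu hv ⊢
    have habsu : 0 < |u| := abs_pos.2 hu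
    have habsv : 0 < |v| := abs_pos.2 hv
    have hcosu : 0 ≤ 1 - Real.cos u := by nlinarith [Real.cos_le_one u]
    have hcosv : 0 ≤ 1 - Real.cos v := by nlinarith [Real.cos_le_one v]
    have hx : (0:ℝ) < u ^ 2 := by positivity
    have hy : (0:ℝ) < c * |v| ^ (2 * H2 / H1) := by positivity
    have hgm : (u ^ 2) ^ θ * (c * |v| ^ (2 * H2 / H1)) ^ (1 - θ) ≤
        u ^ 2 + c * |v| ^ (2 * H2 / H1) := by
      calc (u ^ 2) ^ θ * (c * |v| ^ (2 * H2 / H1)) ^ (1 - θ)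
          ≤ θ * (u ^ 2) + (1 - θ) * (c * |v| ^ (2 * H2 / H1)) :=
            Real.geom_mean_le_arith_mean2_weighted hθ0.le (by linarith)
              hx.le hy.le (by ring)
        _ ≤ u ^ 2 + c * |v| ^ (2 * H2 / H1) := by nlinarith
    have hgmpos : 0 < (u ^ 2) ^ θ * (c * |v| ^ (2 * H2 / H1)) ^ (1 - θ) :=
      mul_pos (Real.rpow_pos_of_pos hx _) (Real.rpow_pos_of_pos hy _)
    have hK : (u ^ 2 + c * |v| ^ (2 * H2 / H1)) ^ (-(H1 / 2)) ≤
        C * (|u| ^ (-P) * |v| ^ (-Q)) := by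
      have step1 : (u ^ 2 + c * |v| ^ (2 * H2 / H1)) ^ (-(H1 / 2)) ≤
          ((u ^ 2) ^ θ * (c * |v| ^ (2 * H2 / H1)) ^ (1 - θ)) ^ (-(H1 / 2)) :=
        Real.rpow_le_rpow_of_nonpos hgmpos hgm (by linarith)
      refine step1.trans_eq ?_
      rw [Real.mul_rpow (Real.rpow_pos_of_pos hx _).le (Real.rpow_pos_of_pos hy _).le]
      have e1 : ((u ^ 2) ^ θ) ^ (-(H1 / 2)) = |u| ^ (-P) := by
        have h2 : (u ^ 2 : ℝ) = |u| ^ ((2:ℕ) : ℝ) := by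
          rw [Real.rpow_natCast]; exact (sq_abs u).symm
        rw [h2, ← Real.rpow_mul (abs_nonneg u), ← Real.rpow_mul (abs_nonneg u)]
        congr 1
        push_cast
        rw [hP]; ring
      have e2 : ((c * |v| ^ (2 * H2 / H1)) ^ (1 - θ)) ^ (-(H1 / 2)) = C * |v| ^ (-Q) := by
        rw [Real.mul_rpow hc.le (Real.rpow_nonneg (abs_nonneg v) _),
          Real.mul_rpow (Real.rpow_nonneg hc.le _)
            (Real.rpow_nonneg (Real.rpow_nonneg (abs_nonneg v) _) _),
          ← Real.rpow_mul hc.le, ← Real.rpow_mul (abs_nonneg v),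
          ← Real.rpow_mul (abs_nonneg v)]
        congr 1
        · rw [hC]; congr 1; ring
        · congr 1
          rw [hQ]
          field_simp
      rw [e1, e2]
      ring
    -- now the final bound
    have hfnonneg : 0 ≤ (2 * (1 - Real.cos u)) * (2 * (1 - Real.cos v)) *
        ((u ^ (2:ℕ) + c * |v| ^ (2 * H2 / H1)) ^ (-(H1 / 2))) / (u ^ (2:ℕ) * v ^ (2:ℕ)) := by
      apply div_nonneg _ (by positivity)
      apply mul_nonneg (mul_nonneg (mul_nonneg (by norm_num) hcosu)
        (mul_nonneg (by norm_num) hcosv))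
      exact Real.rpow_nonneg (by positivity) _
    rw [Real.norm_eq_abs, abs_of_nonneg hfnonneg]
    have eu : |u| ^ (-(2 + P)) = (u ^ 2)⁻¹ * |u| ^ (-P) := by
      rw [show -(2 + P) = (-2) + (-P) by ring, Real.rpow_add habsu]
      congr 1
      rw [show (-2 : ℝ) = -((2:ℕ):ℝ) by norm_num, Real.rpow_neg (abs_nonneg u),
        Real.rpow_natCast, sq_abs]
    have ev : |v| ^ (-(2 + Q)) = (v ^ 2)⁻¹ * |v| ^ (-Q) := by
      rw [show -(2 + Q) = (-2) + (-Q) by ring, Real.rpow_add habsv]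
      congr 1
      rw [show (-2 : ℝ) = -((2:ℕ):ℝ) by norm_num, Real.rpow_neg (abs_nonneg v),
        Real.rpow_natCast, sq_abs]
    calc (2 * (1 - Real.cos u)) * (2 * (1 - Real.cos v)) *
        ((u ^ (2:ℕ) + c * |v| ^ (2 * H2 / H1)) ^ (-(H1 / 2))) / (u ^ (2:ℕ) * v ^ (2:ℕ))
        ≤ (2 * (1 - Real.cos u)) * (2 * (1 - Real.cos v)) *
          (C * (|u| ^ (-P) * |v| ^ (-Q))) / (u ^ (2:ℕ) * v ^ (2:ℕ)) := by
          have hNN : 0 ≤ (2 * (1 - Real.cos u)) * (2 * (1 - Real.cos v)) :=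
            mul_nonneg (mul_nonneg (by norm_num) hcosu) (mul_nonneg (by norm_num) hcosv)
          gcongr
      _ = (2 * (1 - Real.cos u) * |u| ^ (-(2 + P))) *
          (C * (2 * (1 - Real.cos v) * |v| ^ (-(2 + Q)))) := by
          rw [eu, ev]
          field_simp
end

section
/- For 0 < H1 ≤ H2 with H1·H2 < H1 + H2 and H2 > 1, the double integral ∫_0^∞ (1+u²)^(-1) ∫_0^{u^{-H1/H2}} u^{H1/H2 - H1} (1 + z^{2H2/H1})^(-H1/2) dz du is finite. -/
open Real MeasureTheory Set

lemma auxA (H1 H2 : ℝ) (h1 : 0 < H1) (h12 : H1 ≤ H2) (h2 : 1 < H2)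
    (hprod : H1 * H2 < H1 + H2) :
    IntegrableOn (fun u : ℝ => (1 + u ^ (2 : ℕ))⁻¹ * u ^ (H1 / H2 - H1)) (Ioi 0) := by
  set a : ℝ := H1 / H2 - H1 with ha
  have hH2 : (0:ℝ) < H2 := by linarith
  have ha1 : -1 < a := by
    have : H1 - 1 < H1 / H2 := by
      rw [lt_div_iff₀ hH2]; nlinarith
    simp only [ha]; linarith
  have ha0 : a ≤ 0 := by
    have : H1 / H2 ≤ H1 := by
      rw [div_le_iff₀ hH2]; nlinarith
    simp only [ha]; linarith
  have hcont : ContinuousOn (fun u : ℝ => (1 + u ^ (2 : ℕ))⁻¹ * u ^ a) (Ioi 0) := by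
    refine ContinuousOn.mul ?_ (continuousOn_id.rpow_const fun x hx => Or.inl (ne_of_gt hx))
    exact (continuous_const.add (continuous_pow 2)).continuousOn.inv₀
      fun x _ => (by positivity : (0:ℝ) < 1 + x ^ 2).ne'
  have hmeas : ∀ s : Set ℝ, MeasurableSet s → s ⊆ Ioi 0 →
      AEStronglyMeasurable (fun u : ℝ => (1 + u ^ (2 : ℕ))⁻¹ * u ^ a)
        (volume.restrict s) := fun s hs hsub =>
    (hcont.mono hsub).aestronglyMeasurable hs
  have h01 : IntegrableOn (fun u : ℝ => (1 + u ^ (2 : ℕ))⁻¹ * u ^ a) (Ioc 0 1) := by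
    have hg : IntegrableOn (fun u : ℝ => u ^ a) (Ioc 0 1) := by
      have := intervalIntegral.intervalIntegrable_rpow' (a := 0) (b := 1) ha1
      rwa [intervalIntegrable_iff_integrableOn_Ioc_of_le zero_le_one] at this
    refine hg.integrable.mono' (hmeas _ measurableSet_Ioc (fun x hx => hx.1)) ?_
    filter_upwards [ae_restrict_mem measurableSet_Ioc] with u hu
    have hu0 : 0 < u := hu.1
    have h1u : (0:ℝ) < 1 + u ^ (2:ℕ) := by positivity
    rw [norm_mul, norm_inv, Real.norm_eq_abs, Real.norm_eq_abs, abs_of_pos h1u,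
      abs_of_pos (rpow_pos_of_pos hu0 a)]
    calc (1 + u ^ (2:ℕ))⁻¹ * u ^ a ≤ 1 * u ^ a := by
          refine mul_le_mul_of_nonneg_right ?_ (rpow_pos_of_pos hu0 a).le
          have h := inv_anti₀ one_pos (by nlinarith : (1:ℝ) ≤ 1 + u ^ (2:ℕ))
          simpa using h
      _ = u ^ a := one_mul _
  have h1i : IntegrableOn (fun u : ℝ => (1 + u ^ (2 : ℕ))⁻¹ * u ^ a) (Ioi 1) := by
    have hg : IntegrableOn (fun u : ℝ => u ^ (a - 2)) (Ioi 1) :=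
      integrableOn_Ioi_rpow_of_lt (by linarith) one_pos
    refine hg.integrable.mono' (hmeas _ measurableSet_Ioi (fun x hx => mem_Ioi.2 (lt_trans one_pos (mem_Ioi.1 hx)))) ?_
    filter_upwards [ae_restrict_mem measurableSet_Ioi] with u hu
    have hu0 : (0:ℝ) < u := lt_trans one_pos hu
    have h1u : (0:ℝ) < 1 + u ^ (2:ℕ) := by positivity
    rw [norm_mul, norm_inv, Real.norm_eq_abs, Real.norm_eq_abs, abs_of_pos h1u,
      abs_of_pos (rpow_pos_of_pos hu0 a)]
    have hsq : u ^ (2:ℕ) = u ^ (2:ℝ) := by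
      rw [← rpow_natCast u 2]; norm_num
    calc (1 + u ^ (2:ℕ))⁻¹ * u ^ a ≤ (u ^ (2:ℕ))⁻¹ * u ^ a := by
          refine mul_le_mul_of_nonneg_right ?_ (rpow_pos_of_pos hu0 a).le
          exact inv_anti₀ (by positivity) (by nlinarith)
      _ = u ^ (a - 2) := by
          rw [hsq, ← rpow_neg hu0.le, ← rpow_add hu0]; ring_nf
  have := h01.union h1i
  rwa [Ioc_union_Ioi_eq_Ioi zero_le_one] at this

lemma auxB (H1 H2 : ℝ) (h1 : 0 < H1) (h12 : H1 ≤ H2) (h2 : 1 < H2) :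
    IntegrableOn (fun z : ℝ => (1 + z ^ (2 * H2 / H1)) ^ (-(H1 / 2))) (Ioi 0) := by
  set b : ℝ := 2 * H2 / H1 with hb
  have hb0 : 0 < b := by positivity
  have hcont : ContinuousOn (fun z : ℝ => (1 + z ^ b) ^ (-(H1 / 2))) (Ioi 0) := by
    refine ContinuousOn.rpow_const ?_ fun x hx => Or.inl ?_
    · exact continuousOn_const.add
        (continuousOn_id.rpow_const fun x hx => Or.inl (ne_of_gt hx))
    · have := rpow_pos_of_pos hx b; positivity
  have hmeas : ∀ s : Set ℝ, MeasurableSet s → s ⊆ Ioi 0 →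
      AEStronglyMeasurable (fun z : ℝ => (1 + z ^ b) ^ (-(H1 / 2)))
        (volume.restrict s) := fun s hs hsub =>
    (hcont.mono hsub).aestronglyMeasurable hs
  have h01 : IntegrableOn (fun z : ℝ => (1 + z ^ b) ^ (-(H1 / 2))) (Ioc 0 1) := by
    have hc : IntegrableOn (fun _ : ℝ => (1:ℝ)) (Ioc 0 1) :=
      integrableOn_const measure_Ioc_lt_top.ne
    refine hc.integrable.mono'
      (hmeas _ measurableSet_Ioc (fun x hx => hx.1)) ?_
    filter_upwards [ae_restrict_mem measurableSet_Ioc] with z hz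
    have hz0 : 0 < z := hz.1
    have h1z : (1:ℝ) ≤ 1 + z ^ b := by
      have := (rpow_pos_of_pos hz0 b).le; linarith
    rw [Real.norm_eq_abs, abs_of_pos (rpow_pos_of_pos (by linarith) _)]
    exact rpow_le_one_of_one_le_of_nonpos h1z (by linarith)
  have h1i : IntegrableOn (fun z : ℝ => (1 + z ^ b) ^ (-(H1 / 2))) (Ioi 1) := by
    have hg : IntegrableOn (fun z : ℝ => z ^ (-H2)) (Ioi 1) :=
      integrableOn_Ioi_rpow_of_lt (by linarith) one_pos
    refine hg.integrable.mono' (hmeas _ measurableSet_Ioi (fun x hx => mem_Ioi.2 (lt_trans one_pos (mem_Ioi.1 hx)))) ?_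
    filter_upwards [ae_restrict_mem measurableSet_Ioi] with z hz
    have hz0 : (0:ℝ) < z := lt_trans one_pos hz
    have hzb : 0 < z ^ b := rpow_pos_of_pos hz0 b
    rw [Real.norm_eq_abs, abs_of_pos (rpow_pos_of_pos (by linarith) _)]
    calc (1 + z ^ b) ^ (-(H1 / 2)) ≤ (z ^ b) ^ (-(H1 / 2)) :=
          rpow_le_rpow_of_nonpos hzb (by linarith) (by linarith)
      _ = z ^ (-H2) := by
          rw [← rpow_mul hz0.le]
          congr 1
          field_simp [hb]
          rw [hb, div_mul_cancel₀ _ h1.ne']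
  have := h01.union h1i
  rwa [Ioc_union_Ioi_eq_Ioi zero_le_one] at this

theorem stmt2 (H1 H2 : ℝ) (h1 : 0 < H1) (h12 : H1 ≤ H2) (h2 : 1 < H2)
    (hprod : H1 * H2 < H1 + H2) :
    IntegrableOn (fun p : ℝ × ℝ =>
        (1 + p.1 ^ (2 : ℕ))⁻¹ * p.1 ^ (H1 / H2 - H1) *
          (1 + p.2 ^ (2 * H2 / H1)) ^ (-(H1 / 2)))
      {p : ℝ × ℝ | 0 < p.1 ∧ 0 < p.2 ∧ p.2 < p.1 ^ (-(H1 / H2))} := by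
  have hA := auxA H1 H2 h1 h12 h2 hprod
  have hB := auxB H1 H2 h1 h12 h2
  have hprodInt : IntegrableOn (fun p : ℝ × ℝ =>
      (1 + p.1 ^ (2 : ℕ))⁻¹ * p.1 ^ (H1 / H2 - H1) *
        (1 + p.2 ^ (2 * H2 / H1)) ^ (-(H1 / 2))) (Ioi 0 ×ˢ Ioi 0) := by
    have := hA.integrable.mul_prod hB.integrable
    rwa [Measure.prod_restrict, ← Measure.volume_eq_prod] at this
  exact hprodInt.mono_set (fun p hp => ⟨hp.1, hp.2.1⟩)
end

section
/- Let q₁, q₂ > 0 satisfy (q₁+q₂)/2 < q₁q₂ < q₁+q₂, and let a(t,s) = g(t,s)/(|t|² + |s|^{2q₂/q₁})^{q₁/2} for (t,s) ∈ ℤ²\{(0,0)} where g is bounded with g(t,s) → 1 as |t|+|s| → ∞. Then Σ_{(t,s)∈ℤ²} |a(t,s)|² < ∞ while Σ_{(t,s)∈ℤ²} |a(t,s)| = ∞. -/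
open Real

lemma aux_mix {x y θ : ℝ} (hx : 0 < x) (hy : 0 < y) (h0 : 0 ≤ θ) (h1 : θ ≤ 1) :
    x ^ θ * y ^ (1 - θ) ≤ x + y := by
  have hm : 0 < max x y := lt_max_of_lt_left hx
  calc x ^ θ * y ^ (1 - θ) ≤ (max x y) ^ θ * (max x y) ^ (1 - θ) := by
        apply mul_le_mul (Real.rpow_le_rpow hx.le (le_max_left _ _) h0)
          (Real.rpow_le_rpow hy.le (le_max_right _ _) (by linarith))
          (Real.rpow_nonneg hy.le _) (Real.rpow_nonneg hm.le _)
    _ = (max x y) ^ (θ + (1 - θ)) := (Real.rpow_add hm _ _).symm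
    _ = max x y := by norm_num
    _ ≤ x + y := max_le_add_of_nonneg hx.le hy.le

lemma aux_sum_int {r : ℝ} (hr : 1 < r) :
    Summable (fun t : ℤ => if t = 0 then (1:ℝ) else 1 / |(t:ℝ)| ^ r) := by
  have h := (Real.summable_one_div_int_add_rpow 0 r).mpr hr
  apply h.congr_cofinite
  rw [Filter.EventuallyEq, Filter.eventually_cofinite]
  apply Set.Finite.subset (Set.finite_singleton (0:ℤ))
  intro t ht
  simp only [Set.mem_setOf_eq] at ht
  simp only [Set.mem_singleton_iff]
  by_contra h0
  exact ht (by rw [if_neg h0, add_zero])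

set_option maxHeartbeats 1000000 in
theorem stmt19 (q1 q2 : ℝ) (hq1 : 0 < q1) (hq2 : 0 < q2)
    (hlow : (q1 + q2) / 2 < q1 * q2) (hup : q1 * q2 < q1 + q2)
    (g : ℤ × ℤ → ℝ) (M : ℝ) (hgbdd : ∀ p, |g p| ≤ M)
    (hglim : Filter.Tendsto g Filter.cofinite (nhds 1))
    (a : ℤ × ℤ → ℝ)
    (ha : ∀ p : ℤ × ℤ, p ≠ (0, 0) →
      a p = g p / ((|(p.1 : ℝ)| ^ (2 : ℝ) +
        |(p.2 : ℝ)| ^ (2 * q2 / q1)) ^ (q1 / 2))) :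
    Summable (fun p : ℤ × ℤ => |a p| ^ (2 : ℕ)) ∧
      ¬ Summable (fun p : ℤ × ℤ => |a p|) := by
  have hM0 : 0 ≤ M := le_trans (abs_nonneg _) (hgbdd (0, 0))
  have hq1' : 1 / 2 < q1 := by nlinarith
  have hq2' : 1 / 2 < q2 := by nlinarith
  have h2q1 : (0:ℝ) < 2 * q1 := by linarith
  have h2q2 : (0:ℝ) < 2 * q2 := by linarith
  have hg2 : ∀ p, (g p) ^ 2 ≤ M ^ 2 := fun p => by
    have h := abs_le.mp (hgbdd p); nlinarith [h.1, h.2]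
  constructor
  · -- Part A
    set θ : ℝ := (1 / (2 * q1) + (1 - 1 / (2 * q2))) / 2 with hθdef
    have huv : 1 / (2 * q1) + 1 / (2 * q2) < 1 := by
      rw [div_add_div _ _ h2q1.ne' h2q2.ne', div_lt_one (by positivity)]
      nlinarith
    have ha1 : 0 < 1 / (2 * q1) := by positivity
    have ha2 : 1 / (2 * q2) < 1 := by rw [div_lt_one h2q2]; linarith
    have ha1' : 1 / (2 * q1) < 1 := by rw [div_lt_one h2q1]; linarith
    have ha2' : 0 < 1 / (2 * q2) := by positivity
    have hθ0 : 0 < θ := by rw [hθdef]; linarith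
    have hθ1 : θ < 1 := by rw [hθdef]; linarith
    have hθlow : 1 / (2 * q1) < θ := by rw [hθdef]; linarith
    have hθhigh : 1 / (2 * q2) < 1 - θ := by rw [hθdef]; linarith
    set r : ℝ := 2 * q1 * θ with hrdef
    set σ : ℝ := 2 * q2 * (1 - θ) with hσdef
    have hr1 : 1 < r := by
      have := mul_lt_mul_of_pos_left hθlow h2q1
      rw [mul_one_div, div_self h2q1.ne'] at this
      linarith
    have hσ1 : 1 < σ := by
      have := mul_lt_mul_of_pos_left hθhigh h2q2
      rw [mul_one_div, div_self h2q2.ne'] at this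
      linarith
    have hrle : r ≤ 2 * q1 := by nlinarith
    have hσle : σ ≤ 2 * q2 := by nlinarith
    set C : ℝ := M ^ 2 + (a (0, 0)) ^ 2 with hCdef
    have hC0 : 0 ≤ C := by positivity
    have hCM : M ^ 2 ≤ C := by nlinarith [sq_nonneg (a (0,0))]
    have keyA : ∀ p : ℤ × ℤ, |a p| ^ (2 : ℕ) ≤
        C * ((if p.1 = 0 then (1:ℝ) else 1 / |(p.1:ℝ)| ^ r) *
          (if p.2 = 0 then (1:ℝ) else 1 / |(p.2:ℝ)| ^ σ)) := by
      rintro ⟨t, s⟩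
      dsimp only
      rw [sq_abs]
      by_cases ht : t = 0 <;> by_cases hs : s = 0
      · subst ht; subst hs
        rw [if_pos rfl, if_pos rfl]
        nlinarith [sq_nonneg M]
      · -- t = 0, s ≠ 0
        subst ht
        have hp : ((0:ℤ), s) ≠ ((0:ℤ), (0:ℤ)) := by simpa using hs
        have hs' : (0:ℝ) < |(s:ℝ)| := abs_pos.mpr (Int.cast_ne_zero.mpr hs)
        have hs1 : (1:ℝ) ≤ |(s:ℝ)| := by
          rw [← Int.cast_abs]; exact_mod_cast Int.one_le_abs hs
        have haval : a (0, s) = g (0, s) / |(s:ℝ)| ^ q2 := by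
          rw [ha _ hp]
          norm_num [Real.zero_rpow]
          rw [← Real.rpow_mul (abs_nonneg _)]
          congr 1
          field_simp
        rw [if_pos rfl, if_neg hs, haval, div_pow]
        have hpow : (|(s:ℝ)| ^ q2) ^ (2:ℕ) = |(s:ℝ)| ^ (2 * q2) := by
          rw [← Real.rpow_natCast (|(s:ℝ)| ^ q2) 2, ← Real.rpow_mul (abs_nonneg _)]
          congr 1; push_cast; ring
        rw [hpow]
        have hmono : |(s:ℝ)| ^ σ ≤ |(s:ℝ)| ^ (2 * q2) :=
          Real.rpow_le_rpow_of_exponent_le hs1 hσle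
        calc g (0, s) ^ 2 / |(s:ℝ)| ^ (2 * q2)
            ≤ M ^ 2 / |(s:ℝ)| ^ σ :=
              div_le_div₀ (by positivity) (hg2 _) (Real.rpow_pos_of_pos hs' _) hmono
          _ ≤ C / |(s:ℝ)| ^ σ := by gcongr
          _ = C * (1 * (1 / |(s:ℝ)| ^ σ)) := by ring
      · -- s = 0, t ≠ 0
        subst hs
        have hp : ((t:ℤ), (0:ℤ)) ≠ ((0:ℤ), (0:ℤ)) := by simpa using ht
        have ht' : (0:ℝ) < |(t:ℝ)| := abs_pos.mpr (Int.cast_ne_zero.mpr ht)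
        have ht1 : (1:ℝ) ≤ |(t:ℝ)| := by
          rw [← Int.cast_abs]; exact_mod_cast Int.one_le_abs ht
        have haval : a (t, 0) = g (t, 0) / |(t:ℝ)| ^ q1 := by
          rw [ha _ hp]
          norm_num [Real.zero_rpow (by positivity : 2 * q2 / q1 ≠ 0)]
          have h2 : ((t:ℝ)) ^ (2:ℕ) = |(t:ℝ)| ^ (2:ℝ) := by
            rw [← sq_abs, ← Real.rpow_natCast]
            norm_num
          rw [h2, ← Real.rpow_mul (abs_nonneg _)]
          congr 1
          ring
        rw [if_neg ht, if_pos rfl, haval, div_pow]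
        have hpow : (|(t:ℝ)| ^ q1) ^ (2:ℕ) = |(t:ℝ)| ^ (2 * q1) := by
          rw [← Real.rpow_natCast (|(t:ℝ)| ^ q1) 2, ← Real.rpow_mul (abs_nonneg _)]
          congr 1; push_cast; ring
        rw [hpow]
        have hmono : |(t:ℝ)| ^ r ≤ |(t:ℝ)| ^ (2 * q1) :=
          Real.rpow_le_rpow_of_exponent_le ht1 hrle
        calc g (t, 0) ^ 2 / |(t:ℝ)| ^ (2 * q1)
            ≤ M ^ 2 / |(t:ℝ)| ^ r :=
              div_le_div₀ (by positivity) (hg2 _) (Real.rpow_pos_of_pos ht' _) hmono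
          _ ≤ C / |(t:ℝ)| ^ r := by gcongr
          _ = C * ((1 / |(t:ℝ)| ^ r) * 1) := by ring
      · -- both nonzero
        have hp : ((t:ℤ), s) ≠ ((0:ℤ), (0:ℤ)) := fun h => ht (congrArg Prod.fst h)
        have ht' : (0:ℝ) < |(t:ℝ)| := abs_pos.mpr (Int.cast_ne_zero.mpr ht)
        have hs' : (0:ℝ) < |(s:ℝ)| := abs_pos.mpr (Int.cast_ne_zero.mpr hs)
        set x : ℝ := |(t:ℝ)| ^ (2:ℝ) with hxdef
        set y : ℝ := |(s:ℝ)| ^ (2 * q2 / q1) with hydef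
        have hx : 0 < x := Real.rpow_pos_of_pos ht' _
        have hy : 0 < y := Real.rpow_pos_of_pos hs' _
        have hmix := aux_mix hx hy hθ0.le hθ1.le
        have e1 : (x ^ θ * y ^ (1 - θ)) ^ q1 = |(t:ℝ)| ^ r * |(s:ℝ)| ^ σ := by
          rw [Real.mul_rpow (Real.rpow_nonneg hx.le _) (Real.rpow_nonneg hy.le _),
            ← Real.rpow_mul hx.le, ← Real.rpow_mul hy.le, hxdef, hydef,
            ← Real.rpow_mul (abs_nonneg _), ← Real.rpow_mul (abs_nonneg _)]
          congr 1
          · congr 1; rw [hrdef]; ring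
          · congr 1; rw [hσdef]; field_simp
        have hXq : |(t:ℝ)| ^ r * |(s:ℝ)| ^ σ ≤ (x + y) ^ q1 := by
          rw [← e1]
          exact Real.rpow_le_rpow (by positivity) hmix hq1.le
        have hD2 : ((x + y) ^ (q1 / 2)) ^ (2:ℕ) = (x + y) ^ q1 := by
          rw [← Real.rpow_natCast ((x + y) ^ (q1 / 2)) 2, ← Real.rpow_mul (by positivity)]
          norm_num
        have haval : a (t, s) = g (t, s) / ((x + y) ^ (q1 / 2)) := by
          rw [ha _ hp]
        rw [if_neg ht, if_neg hs, haval, div_pow, hD2]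
        have hprodpos : 0 < |(t:ℝ)| ^ r * |(s:ℝ)| ^ σ := by positivity
        calc g (t, s) ^ 2 / (x + y) ^ q1
            ≤ M ^ 2 / (|(t:ℝ)| ^ r * |(s:ℝ)| ^ σ) :=
              div_le_div₀ (by positivity) (hg2 _) hprodpos hXq
          _ ≤ C / (|(t:ℝ)| ^ r * |(s:ℝ)| ^ σ) := by gcongr
          _ = C * ((1 / |(t:ℝ)| ^ r) * (1 / |(s:ℝ)| ^ σ)) := by ring
    have hφ := aux_sum_int hr1
    have hψ := aux_sum_int hσ1
    have hprod := (hφ.mul_of_nonneg hψ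
      (fun t => by dsimp only; split <;> positivity)
      (fun s => by dsimp only; split <;> positivity)).mul_left C
    exact Summable.of_nonneg_of_le (fun p => by positivity) keyA hprod
  · -- Part B
    intro hS
    have hev : {p : ℤ × ℤ | ¬ (1/2 < g p)}.Finite :=
      Filter.eventually_cofinite.mp (hglim.eventually (eventually_gt_nhds (by norm_num : (1/2:ℝ) < 1)))
    set T : Set (ℤ × ℤ) := insert ((0,0) : ℤ × ℤ) {p | ¬ (1/2 < g p)} with hTdef
    have hT : T.Finite := hev.insert _
    set c : ℝ := 2 * (2:ℝ) ^ (q1/2) with hcdef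
    have hc0 : 0 < c := by positivity
    set E : ℤ × ℤ → ℝ := fun p => 1 / (|(p.1:ℝ)| ^ q1 + |(p.2:ℝ)| ^ q2) with hEdef
    have hEnn : ∀ p, 0 ≤ E p := fun p => by positivity
    have cmp : ∀ p : ℤ × ℤ, p ∉ T → E p ≤ c * |a p| := by
      rintro ⟨t, s⟩ hpT
      have hp0 : ((t:ℤ), s) ≠ ((0:ℤ), (0:ℤ)) := fun h => hpT (by rw [h]; exact Set.mem_insert _ _)
      have hgp : 1/2 < g (t, s) := by
        by_contra h
        exact hpT (Set.mem_insert_of_mem _ h)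
      have hts : t ≠ 0 ∨ s ≠ 0 := by
        by_contra h
        push_neg at h
        exact hp0 (by rw [h.1, h.2])
      set x : ℝ := |(t:ℝ)| ^ (2:ℝ) with hxdef
      set y : ℝ := |(s:ℝ)| ^ (2 * q2 / q1) with hydef
      have hx0 : 0 ≤ x := Real.rpow_nonneg (abs_nonneg _) _
      have hy0 : 0 ≤ y := Real.rpow_nonneg (abs_nonneg _) _
      have hxy : 0 < x + y := by
        rcases hts with h | h
        · have : (0:ℝ) < |(t:ℝ)| := abs_pos.mpr (Int.cast_ne_zero.mpr h)
          have := Real.rpow_pos_of_pos this (2:ℝ)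
          rw [← hxdef] at this
          linarith
        · have : (0:ℝ) < |(s:ℝ)| := abs_pos.mpr (Int.cast_ne_zero.mpr h)
          have := Real.rpow_pos_of_pos this (2 * q2 / q1)
          rw [← hydef] at this
          linarith
      have hxq : x ^ (q1/2) = |(t:ℝ)| ^ q1 := by
        rw [hxdef, ← Real.rpow_mul (abs_nonneg _)]
        congr 1; ring
      have hyq : y ^ (q1/2) = |(s:ℝ)| ^ q2 := by
        rw [hydef, ← Real.rpow_mul (abs_nonneg _)]
        congr 1; field_simp
      have hS0 : 0 < |(t:ℝ)| ^ q1 + |(s:ℝ)| ^ q2 := by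
        rw [← hxq, ← hyq]
        rcases hts with h | h
        · have : (0:ℝ) < |(t:ℝ)| := abs_pos.mpr (Int.cast_ne_zero.mpr h)
          have hxx : 0 < x := Real.rpow_pos_of_pos this _
          have := Real.rpow_pos_of_pos hxx (q1/2)
          have := Real.rpow_nonneg hy0 (q1/2)
          linarith
        · have : (0:ℝ) < |(s:ℝ)| := abs_pos.mpr (Int.cast_ne_zero.mpr h)
          have hyy : 0 < y := Real.rpow_pos_of_pos this _
          have := Real.rpow_pos_of_pos hyy (q1/2)
          have := Real.rpow_nonneg hx0 (q1/2)
          linarith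
      have hXle : (x + y) ^ (q1/2) ≤ (2:ℝ) ^ (q1/2) * (|(t:ℝ)| ^ q1 + |(s:ℝ)| ^ q2) := by
        have h2m : x + y ≤ 2 * max x y := by
          rcases le_total x y with h | h
          · rw [max_eq_right h]; linarith
          · rw [max_eq_left h]; linarith
        have hmle : 0 ≤ max x y := le_max_of_le_left hx0
        calc (x + y) ^ (q1/2) ≤ (2 * max x y) ^ (q1/2) :=
              Real.rpow_le_rpow (by positivity) h2m (by positivity)
          _ = (2:ℝ) ^ (q1/2) * (max x y) ^ (q1/2) :=
              Real.mul_rpow (by norm_num) hmle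
          _ ≤ (2:ℝ) ^ (q1/2) * (|(t:ℝ)| ^ q1 + |(s:ℝ)| ^ q2) := by
              apply mul_le_mul_of_nonneg_left _ (by positivity)
              rcases max_cases x y with ⟨hm, _⟩ | ⟨hm, _⟩ <;> rw [hm]
              · rw [← hxq, ← hyq]
                have := Real.rpow_nonneg hy0 (q1/2)
                linarith
              · rw [← hxq, ← hyq]
                have := Real.rpow_nonneg hx0 (q1/2)
                linarith
      have hDpos : 0 < (x + y) ^ (q1/2) := Real.rpow_pos_of_pos hxy _
      have haval : a (t, s) = g (t, s) / ((x + y) ^ (q1/2)) := by rw [ha _ hp0]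
      have hgabs : 1/2 ≤ |g (t, s)| := by
        rw [abs_of_pos (by linarith)]; linarith
      have habsa : (1/2) / ((2:ℝ) ^ (q1/2) * (|(t:ℝ)| ^ q1 + |(s:ℝ)| ^ q2)) ≤ |a (t, s)| := by
        rw [haval, abs_div, abs_of_pos hDpos]
        exact div_le_div₀ (abs_nonneg _) hgabs hDpos hXle
      have hEeq : E (t, s) = c * ((1/2) / ((2:ℝ) ^ (q1/2) * (|(t:ℝ)| ^ q1 + |(s:ℝ)| ^ q2))) := by
        rw [hEdef, hcdef]
        dsimp only
        have h2p : (0:ℝ) < (2:ℝ) ^ (q1/2) := by positivity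
        field_simp
      rw [hEeq]
      exact mul_le_mul_of_nonneg_left habsa hc0.le
    classical
    have hE : Summable E := by
      have h1 : Summable (fun p : ℤ × ℤ => if p ∈ T then (0:ℝ) else E p) := by
        apply Summable.of_nonneg_of_le (fun p => ?_) (fun p => ?_) (hS.mul_left c)
        · split_ifs with h
          · exact le_refl 0
          · exact hEnn p
        · split_ifs with h
          · positivity
          · exact cmp p h
      apply h1.congr_cofinite
      rw [Filter.EventuallyEq, Filter.eventually_cofinite]
      apply hT.subset
      intro p hp
      simp only [Set.mem_setOf_eq] at hp
      by_contra h0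
      exact hp (by rw [if_neg h0])
    set L : ℤ × ℤ → ℝ := fun p =>
      if |(p.2:ℝ)| ≤ |(p.1:ℝ)| ^ (q1/q2) then 1 / (2 * |(p.1:ℝ)| ^ q1) else 0 with hLdef
    have hLnn : ∀ p, 0 ≤ L p := fun p => by
      rw [hLdef]; dsimp only; split <;> positivity
    have hLE : ∀ p, L p ≤ E p := by
      rintro ⟨t, s⟩
      rw [hLdef, hEdef]
      dsimp only
      split_ifs with h
      · by_cases ht : t = 0
        · subst ht
          rw [show |((0:ℤ):ℝ)| = 0 by norm_num, Real.zero_rpow hq1.ne']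
          norm_num
          positivity
        · have ht' : (0:ℝ) < |(t:ℝ)| := abs_pos.mpr (Int.cast_ne_zero.mpr ht)
          have hsq : |(s:ℝ)| ^ q2 ≤ |(t:ℝ)| ^ q1 := by
            calc |(s:ℝ)| ^ q2 ≤ (|(t:ℝ)| ^ (q1/q2)) ^ q2 :=
                  Real.rpow_le_rpow (abs_nonneg _) h hq2.le
              _ = |(t:ℝ)| ^ q1 := by
                  rw [← Real.rpow_mul (abs_nonneg _)]
                  congr 1; field_simp
          apply one_div_le_one_div_of_le
          · positivity
          · have := Real.rpow_pos_of_pos ht' q1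
            linarith
      · positivity
    have hL : Summable L := Summable.of_nonneg_of_le hLnn hLE hE
    obtain ⟨hfib1, hfib2⟩ := (summable_prod_of_nonneg hLnn).mp hL
    set e : ℝ := q1 - q1/q2 with hedef
    have low : ∀ t : ℤ, t ≠ 0 → (1/2) * (1 / |(t:ℝ)| ^ e) ≤ ∑' s : ℤ, L (t, s) := by
      intro t ht
      have habs : (0:ℝ) < |(t:ℝ)| := abs_pos.mpr (Int.cast_ne_zero.mpr ht)
      set X : ℝ := |(t:ℝ)| ^ (q1/q2) with hXdef
      have hX0 : 0 ≤ X := Real.rpow_nonneg (abs_nonneg _) _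
      set n : ℤ := ⌊X⌋ with hndef
      have hn0 : (0:ℤ) ≤ n := Int.floor_nonneg.mpr hX0
      have hterm : ∀ s ∈ Finset.Icc (0:ℤ) n, L (t, s) = 1 / (2 * |(t:ℝ)| ^ q1) := by
        intro s hs
        obtain ⟨h0s, hsn⟩ := Finset.mem_Icc.mp hs
        have hcond : |(s:ℝ)| ≤ |(t:ℝ)| ^ (q1/q2) := by
          rw [abs_of_nonneg (by exact_mod_cast h0s : (0:ℝ) ≤ (s:ℝ))]
          calc (s:ℝ) ≤ (n:ℝ) := by exact_mod_cast hsn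
            _ ≤ X := Int.floor_le X
        rw [hLdef]
        exact if_pos hcond
      have hcard : ((Finset.Icc (0:ℤ) n).card : ℝ) = (n:ℝ) + 1 := by
        rw [Int.card_Icc]
        have h1 : ((n + 1 - 0).toNat : ℤ) = n + 1 - 0 := Int.toNat_of_nonneg (by linarith)
        have h2 : (((n + 1 - 0).toNat : ℤ) : ℝ) = ((n : ℝ) + 1 - 0 : ℝ) := by
          rw [h1]; push_cast; ring
        rw [Int.cast_natCast] at h2
        rw [h2]; ring
      have hsum : ∑ s ∈ Finset.Icc (0:ℤ) n, L (t, s) = ((n:ℝ) + 1) * (1 / (2 * |(t:ℝ)| ^ q1)) := by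
        rw [Finset.sum_congr rfl hterm, Finset.sum_const, nsmul_eq_mul, hcard]
      have hle1 : X ≤ (n:ℝ) + 1 := le_of_lt (Int.lt_floor_add_one X)
      have hsplit : X = |(t:ℝ)| ^ q1 / |(t:ℝ)| ^ e := by
        rw [hXdef, hedef, ← Real.rpow_sub habs]
        congr 1; ring
      have hstart : (1/2) * (1 / |(t:ℝ)| ^ e) = X * (1 / (2 * |(t:ℝ)| ^ q1)) := by
        rw [hsplit]
        have h1 : (0:ℝ) < |(t:ℝ)| ^ q1 := Real.rpow_pos_of_pos habs _
        have h2 : (0:ℝ) < |(t:ℝ)| ^ e := Real.rpow_pos_of_pos habs _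
        field_simp
      calc (1/2) * (1 / |(t:ℝ)| ^ e) = X * (1 / (2 * |(t:ℝ)| ^ q1)) := hstart
        _ ≤ ((n:ℝ) + 1) * (1 / (2 * |(t:ℝ)| ^ q1)) :=
            mul_le_mul_of_nonneg_right hle1 (by positivity)
        _ = ∑ s ∈ Finset.Icc (0:ℤ) n, L (t, s) := hsum.symm
        _ ≤ ∑' s : ℤ, L (t, s) := Summable.sum_le_tsum _ (fun s _ => hLnn (t, s)) (hfib1 t)
    have hG : Summable (fun t : ℤ => if t = 0 then (0:ℝ) else (1/2) * (1 / |(t:ℝ)| ^ e)) := by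
      apply Summable.of_nonneg_of_le (fun t => by split <;> positivity)
        (fun t => ?_) hfib2
      split_ifs with h
      · exact tsum_nonneg (fun s => hLnn (t, s))
      · exact low t h
    have hfin : Summable (fun t : ℤ => 1 / |(t:ℝ) + 0| ^ e) := by
      apply (hG.mul_left 2).congr_cofinite
      rw [Filter.EventuallyEq, Filter.eventually_cofinite]
      apply Set.Finite.subset (Set.finite_singleton (0:ℤ))
      intro t htt
      simp only [Set.mem_setOf_eq] at htt
      simp only [Set.mem_singleton_iff]
      by_contra h0
      apply htt
      rw [if_neg h0, add_zero]
      ring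
    have hegt : 1 < e := (Real.summable_one_div_int_add_rpow 0 e).mp hfin
    have helt : e < 1 := by
      rw [hedef]
      have h2 : q1 - q1/q2 = (q1*q2 - q1)/q2 := by field_simp
      rw [h2, div_lt_one hq2]
      nlinarith
    linarith
end
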